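/- Let P be a monotone-constraint program, M a supported model of P, and suppose P is tight on M. Then M is a stable model of P (Fages Lemma for monotone-constraint programs). -/

import Mathlib

universe u

/-- A constraint `A = (X, C)`: domain `X` and a family `C` of subsets of `X`. -/
structure Constraint (α : Type u) where
  dom : Set α
  sat : Set (Set α)
  sat_sub : ∀ Y ∈ sat, Y ⊆ dom

/-- `M ⊨ A` iff `M ∩ Dom(A) ∈ C`. -/
def Constraint.Sat {α : Type u} (M : Set α) (A : Constraint α) : Prop :=
  M ∩ A.dom ∈ A.sat

/-- A constraint is monotone if its satisfying family is closed under supersets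
within the domain. -/
def Constraint.Mono {α : Type u} (A : Constraint α) : Prop :=
  ∀ W Y : Set α, W ∈ A.sat → W ⊆ Y → Y ⊆ A.dom → Y ∈ A.sat

/-- A rule `A ← A₁,…,A_k, not(A_{k+1}),…,not(A_m)`. -/
structure Rule (α : Type u) where
  head : Constraint α
  pos : Set (Constraint α)
  neg : Set (Constraint α)

/-- A constraint program is a set of rules. -/
abbrev Program (α : Type u) := Set (Rule α)

def Rule.Horn {α : Type u} (r : Rule α) : Prop := r.neg = ∅

def Rule.Mono {α : Type u} (r : Rule α) : Prop :=
  r.head.Mono ∧ (∀ A ∈ r.pos, A.Mono) ∧ (∀ A ∈ r.neg, A.Mono)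

def Program.Horn {α : Type u} (P : Program α) : Prop := ∀ r ∈ P, r.Horn

def Program.Mono {α : Type u} (P : Program α) : Prop := ∀ r ∈ P, r.Mono

/-- `M` satisfies the body of `r`. -/
def Rule.BodySat {α : Type u} (M : Set α) (r : Rule α) : Prop :=
  (∀ A ∈ r.pos, Constraint.Sat M A) ∧ (∀ A ∈ r.neg, ¬ Constraint.Sat M A)

/-- `P(M)`: the set of `M`-applicable rules of `P`. -/
def Program.app {α : Type u} (P : Program α) (M : Set α) : Program α :=
  {r ∈ P | r.BodySat M}

/-- `hset(r) = Dom(hd(r))`. -/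
def Rule.hset {α : Type u} (r : Rule α) : Set α := r.head.dom

/-- `hset(P)`: union of the headsets of rules of `P`. -/
def Program.hset {α : Type u} (P : Program α) : Set α := ⋃ r ∈ P, r.hset

def Rule.atoms {α : Type u} (r : Rule α) : Set α :=
  r.head.dom ∪ (⋃ A ∈ r.pos, A.dom) ∪ (⋃ A ∈ r.neg, A.dom)

/-- `At(P)`: atoms occurring in domains of constraints of `P`. -/
def Program.atoms {α : Type u} (P : Program α) : Set α := ⋃ r ∈ P, r.atoms

/-- `M` is a model of `P`. -/
def Program.IsModel {α : Type u} (P : Program α) (M : Set α) : Prop :=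
  ∀ r ∈ P, r.BodySat M → Constraint.Sat M r.head

/-- `M` is a supported model of `P`. -/
def Program.Supported {α : Type u} (P : Program α) (M : Set α) : Prop :=
  P.IsModel M ∧ M ⊆ (P.app M).hset

/-- The nondeterministic one-step provability operator `T_P^nd`. -/
def Program.Tnd {α : Type u} (P : Program α) (M : Set α) : Set (Set α) :=
  {M' | M' ⊆ (P.app M).hset ∧ ∀ r ∈ P.app M, Constraint.Sat M' r.head}

/-- A `P`-computation: a transfinite sequence starting at `∅`, increasing, with
each successor step nondeterministically one-step provable, continuous at limits. -/
structure PComputation {α : Type u} (P : Program α) where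
  X : Ordinal.{u} → Set α
  zero : X 0 = ∅
  incr : ∀ o, X o ⊆ X (o + 1)
  step : ∀ o, X (o + 1) ∈ P.Tnd (X o)
  limit : ∀ o : Ordinal.{u}, Order.IsSuccLimit o → X o = ⋃ β < o, X β

/-- The result `R_t` of a computation. -/
def PComputation.result {α : Type u} {P : Program α} (t : PComputation P) : Set α :=
  ⋃ o, t.X o

/-- `M` is a derivable model of `P`: the result of some `P`-computation. -/
def Program.Derivable {α : Type u} (P : Program α) (M : Set α) : Prop :=
  ∃ t : PComputation P, t.result = M

/-- The canonical sequence `t^{P,M}`: `X₀ = ∅`, `X_{β+1} = hset(P(X_β)) ∩ M`,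
unions at limits. -/
noncomputable def canSeq {α : Type u} (P : Program α) (M : Set α) (o : Ordinal.{u}) :
    Set α :=
  Ordinal.limitRecOn o ∅ (fun _ ih => (P.app ih).hset ∩ M)
    (fun o _ ih => ⋃ β : Ordinal.{u}, ⋃ h : β < o, ih β h)

/-- `Can(P,M)`: the result of the canonical computation. -/
noncomputable def Can {α : Type u} (P : Program α) (M : Set α) : Set α :=
  ⋃ o, canSeq P M o

/-- The reduct of a single rule: drop negated literals. -/
def Rule.pos_part {α : Type u} (r : Rule α) : Rule α := ⟨r.head, r.pos, ∅⟩

/-- The reduct `P^M`. -/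
def Program.reduct {α : Type u} (P : Program α) (M : Set α) : Program α :=
  {r' | ∃ r ∈ P, (∀ A ∈ r.neg, ¬ Constraint.Sat M A) ∧ r' = r.pos_part}

/-- `M` is a stable model of `P`: a derivable model of the reduct `P^M`. -/
def Program.Stable {α : Type u} (P : Program α) (M : Set α) : Prop :=
  (P.reduct M).Derivable M

/-- `N ⊨_M P`: `N` is an `M`-maximal model of the Horn program `P`. -/
def Program.MMax {α : Type u} (P : Program α) (M N : Set α) : Prop :=
  N ⊆ M ∧ P.IsModel N ∧ M ∩ (P.app N).hset ⊆ N

/-- `(X,Y)` is an SE-model of `P`. -/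
def Program.SE {α : Type u} (P : Program α) (X Y : Set α) : Prop :=
  X ⊆ Y ∧ P.IsModel Y ∧ (P.reduct Y).MMax Y X

/-- `(X,Y)` is a UE-model of `P`. -/
def Program.UE {α : Type u} (P : Program α) (X Y : Set α) : Prop :=
  P.SE X Y ∧ ∀ X', P.SE X' Y → X ⊆ X' → X = X' ∨ X' = Y

/-- Strong equivalence of monotone-constraint programs. -/
def StrongEq {α : Type u} (P Q : Program α) : Prop :=
  ∀ R : Program α, R.Mono → ∀ M : Set α, (P ∪ R).Stable M ↔ (Q ∪ R).Stable M

/-- The rule `(D,{D}) ←`. -/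
def factRule {α : Type u} (D : Set α) : Rule α :=
  ⟨⟨D, {D}, fun Y hY => by simp only [Set.mem_singleton_iff] at hY; simp [hY]⟩, ∅, ∅⟩

/-- Uniform equivalence of monotone-constraint programs. -/
def UnifEq {α : Type u} (P Q : Program α) : Prop :=
  ∀ D : Set α, ∀ M : Set α,
    (P ∪ {factRule D}).Stable M ↔ (Q ∪ {factRule D}).Stable M

/-- `P` is tight on `M`. -/
def Program.Tight {α : Type u} (P : Program α) (M : Set α) : Prop :=
  ∃ lam : α → Ordinal.{u}, ∀ r ∈ P.app M, ∀ x ∈ M ∩ r.hset,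
    ∀ a ∈ M ∩ (⋃ A ∈ r.pos, A.dom), lam a < lam x



section FagesAux

variable {α : Type u}

lemma canSeq_zero (P : Program α) (M : Set α) : canSeq P M 0 = ∅ := by
  simp [canSeq]

lemma canSeq_succ (P : Program α) (M : Set α) (o : Ordinal.{u}) :
    canSeq P M (o + 1) = (P.app (canSeq P M o)).hset ∩ M := by
  unfold canSeq
  rw [Ordinal.add_one_eq_succ, Ordinal.limitRecOn_succ]

lemma canSeq_limit (P : Program α) (M : Set α) {o : Ordinal.{u}} (ho : Order.IsSuccLimit o) :
    canSeq P M o = ⋃ β < o, canSeq P M β := by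
  unfold canSeq
  rw [Ordinal.limitRecOn_limit _ _ _ _ ho]

lemma sat_mono {A : Constraint α} (hA : A.Mono) {S T : Set α} (hST : S ⊆ T)
    (h : Constraint.Sat S A) : Constraint.Sat T A :=
  hA _ _ h (Set.inter_subset_inter_left _ hST) Set.inter_subset_right

lemma reduct_app_mono {P : Program α} (hMono : P.Mono) (M : Set α) {S T : Set α}
    (hST : S ⊆ T) : (P.reduct M).app S ⊆ (P.reduct M).app T := by
  rintro r' ⟨hr', hpos, -⟩
  obtain ⟨r, hrP, hrneg, rfl⟩ := hr'
  refine ⟨⟨r, hrP, hrneg, rfl⟩, ?_, ?_⟩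
  · intro c hc
    exact sat_mono ((hMono r hrP).2.1 c hc) hST (hpos c hc)
  · intro c hc
    exact absurd hc (Set.notMem_empty c)

lemma hset_mono {P1 P2 : Program α} (h : P1 ⊆ P2) : P1.hset ⊆ P2.hset :=
  Set.iUnion₂_mono' fun r hr => ⟨r, h hr, subset_rfl⟩

end FagesAux

/-- Fages Lemma: A supported model of a monotone-constraint
program that is tight on it is stable. -/
theorem fages_lemma {α : Type u} (P : Program α) (hMono : P.Mono)
    (M : Set α) (hsub : M ⊆ P.atoms) (hSupp : P.Supported M) (hTight : P.Tight M) :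
    P.Stable M := by
  obtain ⟨hMod, hSuppSub⟩ := hSupp
  obtain ⟨lam, hlam⟩ := hTight
  set Q := P.reduct M with hQ
  set X : Ordinal.{u} → Set α := canSeq Q M with hX
  have hX0 : X 0 = ∅ := canSeq_zero Q M
  have hXs : ∀ o, X (o + 1) = (Q.app (X o)).hset ∩ M := fun o => canSeq_succ Q M o
  have hXl : ∀ o : Ordinal.{u}, Order.IsSuccLimit o → X o = ⋃ β < o, X β :=
    fun o ho => canSeq_limit Q M ho
  -- each stage is inside M
  have hXM : ∀ o, X o ⊆ M := by
    intro o
    induction o using Ordinal.limitRecOn with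
    | zero => rw [hX0]; exact Set.empty_subset _
    | add_one o ih => rw [hXs]; exact Set.inter_subset_right
    | limit o ho ih =>
      rw [hXl o ho]
      exact Set.iUnion₂_subset fun β hβ => ih β hβ
  -- successor step inclusion
  have hincr : ∀ o, X o ⊆ X (o + 1) := by
    intro o
    induction o using Ordinal.limitRecOn with
    | zero => rw [hX0]; exact Set.empty_subset _
    | add_one o ih =>
      rw [hXs, hXs]
      exact Set.inter_subset_inter_left _
        (hset_mono (reduct_app_mono hMono M ih))
    | limit o ho ih =>
      rw [hXl o ho]
      refine Set.iUnion₂_subset fun β hβ => ?_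
      refine (ih β hβ).trans ?_
      rw [hXs, hXs]
      refine Set.inter_subset_inter_left _ (hset_mono (reduct_app_mono hMono M ?_))
      rw [hXl o ho]
      exact Set.subset_iUnion₂ (s := fun β _ => X β) β hβ
  -- full monotonicity
  have hXmono : ∀ o1 o2 : Ordinal.{u}, o1 ≤ o2 → X o1 ⊆ X o2 := by
    intro o1 o2
    induction o2 using Ordinal.limitRecOn with
    | zero => intro h; rw [nonpos_iff_eq_zero.mp h]
    | add_one o ih =>
      intro h
      rcases lt_or_eq_of_le h with h' | h'
      · refine (ih (Order.lt_succ_iff.mp h')).trans ?_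
        exact hincr o
      · rw [h']
    | limit o ho ih =>
      intro h
      rcases lt_or_eq_of_le h with h' | h'
      · rw [hXl o ho]
        exact Set.subset_iUnion₂ (s := fun β _ => X β) o1 h'
      · rw [h']
  -- every element of M eventually appears
  have hkey : ∀ o : Ordinal.{u}, ∀ x ∈ M, lam x = o → x ∈ X (o + 1) := by
    intro o
    induction o using Ordinal.induction with
    | h o ih =>
      intro x hxM hlx
      obtain ⟨r, hr, hxr⟩ : ∃ r ∈ P.app M, x ∈ r.hset := by
        have := hSuppSub hxM
        simpa [Program.hset] using this
      have htight := hlam r hr x ⟨hxM, hxr⟩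
      -- all positive-body atoms of r that are in M are already in X o
      have hbody : M ∩ (⋃ A ∈ r.pos, A.dom) ⊆ X o := by
        rintro a ⟨haM, haD⟩
        have hlt : lam a < lam x := htight a ⟨haM, haD⟩
        rw [hlx] at hlt
        have := ih (lam a) hlt a haM rfl
        refine hXmono _ _ ?_ this
        rw [Ordinal.add_one_eq_succ]
        exact Order.succ_le_of_lt hlt
      obtain ⟨hrP, hrpos, hrneg⟩ := hr
      subst hlx
      have hrapp : r.pos_part ∈ Q.app (X (lam x)) := by
        refine ⟨⟨r, hrP, hrneg, rfl⟩, ?_, ?_⟩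
        · intro c hc
          have heq : X (lam x) ∩ c.dom = M ∩ c.dom := by
            apply Set.Subset.antisymm
            · exact Set.inter_subset_inter_left _ (hXM (lam x))
            · rintro a ⟨haM, hac⟩
              exact ⟨hbody ⟨haM, Set.mem_biUnion hc hac⟩, hac⟩
          show X (lam x) ∩ c.dom ∈ c.sat
          rw [heq]
          exact hrpos c hc
        · intro c hc
          exact absurd hc (Set.notMem_empty c)
      rw [hXs]
      refine ⟨?_, hxM⟩
      have hxr' : x ∈ r.pos_part.hset := hxr
      exact Set.mem_biUnion hrapp hxr'
  -- assemble the computation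
  refine ⟨⟨X, hX0, hincr, ?_, hXl⟩, ?_⟩
  · -- step
    intro o
    rw [hXs]
    refine ⟨Set.inter_subset_left, ?_⟩
    rintro r' hr'
    obtain ⟨⟨r, hrP, hrneg, rfl⟩, hpos, -⟩ := hr'
    have hMbody : r.BodySat M := by
      refine ⟨fun c hc => sat_mono ((hMono r hrP).2.1 c hc) (hXM o) (hpos c hc), hrneg⟩
    have hMhead : Constraint.Sat M r.head := hMod r hrP hMbody
    have hdom : r.head.dom ⊆ (Q.app (X o)).hset :=
      Set.subset_iUnion₂ (s := fun (r : Rule α) (_ : r ∈ Q.app (X o)) => r.hset)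
        r.pos_part ⟨⟨r, hrP, hrneg, rfl⟩, hpos, fun c hc => absurd hc (Set.notMem_empty c)⟩
    show ((Q.app (X o)).hset ∩ M) ∩ r.pos_part.head.dom ∈ r.pos_part.head.sat
    have : ((Q.app (X o)).hset ∩ M) ∩ r.head.dom = M ∩ r.head.dom := by
      apply Set.Subset.antisymm
      · exact Set.inter_subset_inter_left _ Set.inter_subset_right
      · rintro a ⟨haM, had⟩
        exact ⟨⟨hdom had, haM⟩, had⟩
    rw [show r.pos_part.head = r.head from rfl, this]
    exact hMhead
  · -- result = M
    apply Set.Subset.antisymm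
    · exact Set.iUnion_subset fun o => hXM o
    · intro x hx
      exact Set.mem_iUnion.mpr ⟨lam x + 1, hkey (lam x) x hx rfl⟩
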